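/- Let S be a finite nonempty subset of ℝ^n, let s : ℕ → S be any sequence, and define the Cesàro averages ζ_T := (1/T) Σ_{t=0}^{T−1} s(t) for T ≥ 1. Then for any finite nonempty family of vectors u_1, …, u_m ∈ ℝ^n there exists β ∈ conv(S) such that min_{1≤j≤m} liminf_{T→∞} (u_j · ζ_T) = min_{1≤j≤m} (u_j · β). -/

import Mathlib

open Filter Finset Topology

/-- Cesàro averages of a sequence taking values in a finite set S ⊆ ℝⁿ can be
replaced, as far as a finite family of min-liminf dot products is concerned, by a single
point of conv(S) (Lemma 4 of the paper). -/
theorem stmt_1 {n : ℕ} {J : Type*} [Fintype J] [Nonempty J]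
    (S : Finset (Fin n → ℝ)) (hS : S.Nonempty)
    (s : ℕ → Fin n → ℝ) (hs : ∀ t, s t ∈ S)
    (u : J → Fin n → ℝ) :
    ∃ β ∈ convexHull ℝ (S : Set (Fin n → ℝ)),
      (Finset.univ.inf' Finset.univ_nonempty fun j =>
        liminf (fun T : ℕ =>
          ∑ i, u j i * ((∑ t ∈ Finset.range T, s t i) / T)) atTop)
      = Finset.univ.inf' Finset.univ_nonempty fun j => ∑ i, u j i * β i := by
  classical
  set K : Set (Fin n → ℝ) := convexHull ℝ (S : Set (Fin n → ℝ)) with hK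
  have hKcomp : IsCompact K := S.finite_toSet.isCompact_convexHull ℝ
  have hKne : K.Nonempty := ⟨hS.choose, subset_convexHull ℝ _ hS.choose_spec⟩
  set ζ : ℕ → Fin n → ℝ := fun T i => (∑ t ∈ Finset.range T, s t i) / T with hζ
  set d : J → (Fin n → ℝ) → ℝ := fun j x => ∑ i, u j i * x i with hd
  have hcont : ∀ j, Continuous (d j) := fun j =>
    continuous_finset_sum _ fun i _ => continuous_const.mul (continuous_apply i)
  set g : J → ℕ → ℝ := fun j T => d j (ζ T) with hg
  -- membership of averages in the hull
  have hmem : ∀ T : ℕ, 1 ≤ T → ζ T ∈ K := by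
    intro T hT
    have hTpos : (0 : ℝ) < (T : ℝ) := by exact_mod_cast hT
    have : ζ T = ∑ t ∈ Finset.range T, ((T : ℝ)⁻¹) • s t := by
      funext i
      simp [hζ, Finset.sum_apply, div_eq_inv_mul, Finset.mul_sum]
    rw [this]
    refine (convex_convexHull ℝ _).sum_mem (fun t _ => by positivity) ?_
      (fun t _ => subset_convexHull ℝ _ (hs t))
    simp [Finset.sum_const, hTpos.ne']
  -- bounds
  choose amin haminK hamin using fun j => hKcomp.exists_isMinOn hKne (hcont j).continuousOn
  choose amax hamaxK hamax using fun j => hKcomp.exists_isMaxOn hKne (hcont j).continuousOn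
  have hbdd_ge : ∀ j, IsBoundedUnder (· ≥ ·) atTop (g j) := by
    intro j
    refine isBoundedUnder_of_eventually_ge (a := d j (amin j))
      (eventually_atTop.2 ⟨1, fun T hT => ?_⟩)
    exact (hamin j) (hmem T hT)
  have hbdd_le : ∀ j, IsBoundedUnder (· ≤ ·) atTop (g j) := by
    intro j
    refine isBoundedUnder_of_eventually_le (a := d j (amax j))
      (eventually_atTop.2 ⟨1, fun T hT => ?_⟩)
    exact (hamax j) (hmem T hT)
  set L : J → ℝ := fun j => liminf (g j) atTop with hL
  obtain ⟨j0, -, hj0⟩ := Finset.exists_mem_eq_inf' (Finset.univ_nonempty (α := J)) L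
  -- frequently close to the liminf
  have hfreq : ∀ k : ℕ, ∃ᶠ T in atTop, 1 ≤ T ∧ |g j0 T - L j0| < 1 / (k + 1) := by
    intro k
    have hεpos : (0 : ℝ) < 1 / (k + 1) := by positivity
    have h1 : ∃ᶠ T in atTop, g j0 T < L j0 + 1 / (k + 1) :=
      frequently_lt_of_liminf_lt ((hbdd_le j0).isCoboundedUnder_ge)
        (by linarith [le_refl (L j0)] : L j0 < L j0 + 1 / (k + 1))
    have h2 : ∀ᶠ T in atTop, L j0 - 1 / (k + 1) < g j0 T :=
      eventually_lt_of_lt_liminf (by linarith [le_refl (L j0)]) (hbdd_ge j0)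
    have h3 : ∀ᶠ T in atTop, 1 ≤ T := eventually_ge_atTop 1
    refine (h1.and_eventually (h2.and h3)).mono ?_
    rintro T ⟨hlt, hgt, hT1⟩
    exact ⟨hT1, abs_sub_lt_iff.2 ⟨by linarith, by linarith⟩⟩
  obtain ⟨φ, hφmono, hφ⟩ := Filter.extraction_forall_of_frequently hfreq
  -- the subsequence g j0 ∘ φ tends to the liminf
  have htendsL : Tendsto (fun k => g j0 (φ k)) atTop (𝓝 (L j0)) := by
    rw [tendsto_iff_dist_tendsto_zero]
    simp only [Real.dist_eq]
    refine squeeze_zero (fun k => abs_nonneg _) (fun k => ((hφ k).2).le) ?_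
    exact tendsto_one_div_add_atTop_nhds_zero_nat
  -- extract a convergent subsequence of the averages
  obtain ⟨β, hβK, ψ, hψmono, hψtends⟩ :=
    hKcomp.tendsto_subseq (x := fun k => ζ (φ k)) (fun k => hmem (φ k) (hφ k).1)
  refine ⟨β, hβK, ?_⟩
  have hcomp : ∀ j, Tendsto (fun k => g j (φ (ψ k))) atTop (𝓝 (d j β)) := fun j =>
    ((hcont j).tendsto β).comp hψtends
  have hβ0 : d j0 β = L j0 :=
    tendsto_nhds_unique (hcomp j0) (htendsL.comp hψmono.tendsto_atTop)
  have hle : ∀ j, L j ≤ d j β := by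
    intro j
    have hmap : map (fun k => φ (ψ k)) atTop ≤ atTop :=
      (hφmono.comp hψmono).tendsto_atTop
    have h1 : L j ≤ liminf (g j) (map (fun k => φ (ψ k)) atTop) := by
      refine liminf_le_liminf_of_le hmap (hbdd_ge j) ?_
      have hb : IsBoundedUnder (· ≤ ·) (map (fun k => φ (ψ k)) atTop) (g j) := by
        rw [Filter.IsBoundedUnder, Filter.map_map]
        exact (hcomp j).isBoundedUnder_le
      exact hb.isCoboundedUnder_ge
    have h2 : liminf (g j) (map (fun k => φ (ψ k)) atTop)
        = liminf (fun k => g j (φ (ψ k))) atTop := by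
      rw [Filter.liminf, Filter.liminf, Filter.map_map]
      rfl
    rw [h2, (hcomp j).liminf_eq] at h1
    exact h1
  -- conclude
  have hgoal : (Finset.univ.inf' Finset.univ_nonempty L)
      = Finset.univ.inf' Finset.univ_nonempty fun j => d j β := by
    apply le_antisymm
    · exact Finset.le_inf' _ _ fun j _ =>
        le_trans (Finset.inf'_le _ (Finset.mem_univ j)) (hle j)
    · calc Finset.univ.inf' Finset.univ_nonempty (fun j => d j β)
          ≤ d j0 β := Finset.inf'_le _ (Finset.mem_univ j0)
        _ = L j0 := hβ0
        _ = Finset.univ.inf' Finset.univ_nonempty L := hj0.symm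
  exact hgoal
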